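/- Let R be a reduced commutative Noetherian ring and M a finitely generated reflexive R-module. Then the map σ sending an endomorphism g of the trace ideal τ(M) to the unique endomorphism f of M satisfying α(f(m)) = g(α(m)) for all α ∈ Hom_R(M,R) and m ∈ M is an isomorphism of R-algebras from End_R(τ(M)) onto the center of End_R(M). -/

import Mathlib

universe u v

/-- The trace ideal of a module: the ideal generated by all images of maps `M →ₗ[R] R`. -/
def traceIdeal (R : Type u) (M : Type v) [CommRing R] [AddCommGroup M] [Module R M] :
    Ideal R :=
  ⨆ f : M →ₗ[R] R, LinearMap.range f

theorem apply_mem_traceIdeal {R : Type u} {M : Type v} [CommRing R] [AddCommGroup M]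
    [Module R M] (f : M →ₗ[R] R) (m : M) : f m ∈ traceIdeal R M :=
  Submodule.mem_iSup_of_mem f (LinearMap.mem_range_self f m)

namespace TIaux
open Module LinearMap
variable {R : Type u} {M : Type v} [CommRing R] [AddCommGroup M] [Module R M]
def Compat (g : Module.End R (traceIdeal R M)) (f : Module.End R M) : Prop :=
  ∀ (α : M →ₗ[R] R) (m : M), α (f m) = (g ⟨α m, apply_mem_traceIdeal α m⟩ : R)


theorem sep [Module.IsReflexive R M] (x : M) (h : ∀ α : M →ₗ[R] R, α x = 0) : x = 0 := by
  have h0 : Module.Dual.eval R M x = 0 := by ext α; exact h α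
  exact (Module.bijective_dual_eval R M).injective (a₁ := x) (a₂ := 0) (by simpa using h0)

theorem compat_unique [Module.IsReflexive R M] {g : Module.End R (traceIdeal R M)}
    {f f' : Module.End R M} (hf : Compat g f) (hf' : Compat g f') : f = f' := by
  ext m
  have : f m - f' m = 0 := sep (R := R) (f m - f' m) (fun α => by
    rw [α.map_sub, hf α m, hf' α m, sub_self])
  linear_combination (norm := abel) this

/-- the induced endomorphism of the dual -/
noncomputable def Gmap (g : Module.End R (traceIdeal R M)) :
    Module.Dual R M →ₗ[R] Module.Dual R M where
  toFun α := (traceIdeal R M).subtype ∘ₗ g ∘ₗ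
    (LinearMap.codRestrict (traceIdeal R M) α (apply_mem_traceIdeal α))
  map_add' α β := by
    ext m
    have : (⟨(α + β) m, apply_mem_traceIdeal (α + β) m⟩ : traceIdeal R M)
        = ⟨α m, apply_mem_traceIdeal α m⟩ + ⟨β m, apply_mem_traceIdeal β m⟩ :=
      Subtype.ext (by simp)
    simp only [LinearMap.comp_apply, Submodule.subtype_apply, LinearMap.add_apply,
      LinearMap.codRestrict_apply]
    rw [show (LinearMap.codRestrict (traceIdeal R M) (α + β) (apply_mem_traceIdeal (α + β))) m
        = ⟨α m, apply_mem_traceIdeal α m⟩ + ⟨β m, apply_mem_traceIdeal β m⟩ from this,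
      map_add]
    rfl
  map_smul' r α := by
    ext m
    have : (⟨(r • α) m, apply_mem_traceIdeal (r • α) m⟩ : traceIdeal R M)
        = r • ⟨α m, apply_mem_traceIdeal α m⟩ :=
      Subtype.ext (by simp)
    simp only [LinearMap.comp_apply, Submodule.subtype_apply, LinearMap.smul_apply,
      RingHom.id_apply]
    rw [show (LinearMap.codRestrict (traceIdeal R M) (r • α) (apply_mem_traceIdeal (r • α))) m
        = r • ⟨α m, apply_mem_traceIdeal α m⟩ from this, map_smul]
    rfl

theorem Gmap_apply (g : Module.End R (traceIdeal R M)) (α : M →ₗ[R] R) (m : M) :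
    Gmap g α m = (g ⟨α m, apply_mem_traceIdeal α m⟩ : R) := rfl

noncomputable def sigmaFun [Module.IsReflexive R M] (g : Module.End R (traceIdeal R M)) :
    Module.End R M :=
  ((Module.evalEquiv R M).symm.toLinearMap) ∘ₗ (Gmap g).dualMap ∘ₗ
    (Module.evalEquiv R M).toLinearMap

theorem compat_sigmaFun [Module.IsReflexive R M] (g : Module.End R (traceIdeal R M)) :
    Compat g (sigmaFun g) := by
  intro α m
  have h1 : Module.evalEquiv R M (sigmaFun g m) = (Gmap g).dualMap (Module.evalEquiv R M m) := by
    simp [sigmaFun]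
  have h2 : α (sigmaFun g m) = Module.evalEquiv R M (sigmaFun g m) α := by
    rw [Module.evalEquiv_apply]; rfl
  rw [h2, h1, LinearMap.dualMap_apply, Module.evalEquiv_apply]
  rfl

theorem compat_central [Module.IsReflexive R M] {g : Module.End R (traceIdeal R M)}
    {f : Module.End R M} (hc : Compat g f) (h : Module.End R M) : h * f = f * h := by
  ext m
  have : h (f m) - f (h m) = 0 := by
    refine sep (R := R) _ (fun α => ?_)
    have e1 : α (h (f m)) = (α ∘ₗ h) (f m) := rfl
    rw [α.map_sub, e1, hc (α ∘ₗ h) m, hc α (h m)]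
    exact sub_self _
  have := sub_eq_zero.mp this
  simpa using this

theorem compat_injective [Module.IsReflexive R M] {g g' : Module.End R (traceIdeal R M)}
    {f : Module.End R M} (h : Compat g f) (h' : Compat g' f) : g = g' := by
  ext ⟨x, hx⟩
  have key : ∀ (x : R) (hx : x ∈ ⨆ α : M →ₗ[R] R, LinearMap.range α),
      g ⟨x, hx⟩ = g' ⟨x, hx⟩ := by
    intro x hx
    refine Submodule.iSup_induction' (p := fun α : M →ₗ[R] R => LinearMap.range α)
      (motive := fun x hx => g ⟨x, hx⟩ = g' ⟨x, hx⟩) ?_ ?_ ?_ hx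
    · rintro α x ⟨m, rfl⟩
      exact Subtype.ext ((h α m).symm.trans (h' α m))
    · simp only [show (⟨0, (⨆ α : M →ₗ[R] R, LinearMap.range α).zero_mem⟩ :
        traceIdeal R M) = 0 from rfl, map_zero]
    · intro x y hx hy ihx ihy
      have : (⟨x + y, Submodule.add_mem _ hx hy⟩ : traceIdeal R M)
          = ⟨x, hx⟩ + ⟨y, hy⟩ := rfl
      rw [this, map_add, map_add, ihx, ihy]
  exact congrArg _ (key x hx)

theorem central_identity {f : Module.End R M} (hf : ∀ h : Module.End R M, h * f = f * h)
    (α β : M →ₗ[R] R) (m n : M) : β m * α (f n) = β (f m) * α n := by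
  have h1 := congrArg α (LinearMap.congr_fun (hf (β.smulRight n)) m)
  simp only [Module.End.mul_apply, LinearMap.smulRight_apply, map_smul, smul_eq_mul] at h1
  exact h1.symm

/-- membership in the trace ideal implies annihilation by elements killing all `β n` -/
theorem mul_mem_trace_eq_zero {t : R} (h : ∀ (β : M →ₗ[R] R) (n : M), t * β n = 0)
    {x : R} (hx : x ∈ traceIdeal R M) : t * x = 0 := by
  refine Submodule.iSup_induction (p := fun α : M →ₗ[R] R => LinearMap.range α)
    (motive := fun x => t * x = 0) hx ?_ ?_ ?_
  · rintro α x ⟨n, rfl⟩; exact h α n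
  · exact mul_zero t
  · intro x y hx hy; rw [mul_add, hx, hy, add_zero]

open scoped Classical in
theorem key_reduced [IsReduced R] {f : Module.End R M} (hf : ∀ h : Module.End R M, h * f = f * h)
    (d : Π₀ _ : (M →ₗ[R] R), M)
    (hd : DFinsupp.lsum ℕ (fun α : M →ₗ[R] R => α) d = 0) :
    DFinsupp.lsum ℕ (fun α : M →ₗ[R] R => α ∘ₗ f) d = 0 := by
  set t := DFinsupp.lsum ℕ (fun α : M →ₗ[R] R => α ∘ₗ f) d with ht
  have hsum : t = ∑ α ∈ d.support, α (f (d α)) := by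
    rw [ht, DFinsupp.lsum_apply_apply, DFinsupp.sumAddHom_apply]; rfl
  have hsum0 : (∑ α ∈ d.support, α (d α)) = 0 := by
    rw [← hd, DFinsupp.lsum_apply_apply, DFinsupp.sumAddHom_apply]; rfl
  have hkill : ∀ (β : M →ₗ[R] R) (n : M), t * β n = 0 := by
    intro β n
    rw [hsum, Finset.sum_mul]
    have : ∀ α ∈ d.support, α (f (d α)) * β n = α (d α) * β (f n) := by
      intro α _
      exact (central_identity hf β α (d α) n).symm
    rw [Finset.sum_congr rfl this, ← Finset.sum_mul, hsum0, zero_mul]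
  have htmem : t ∈ traceIdeal R M := by
    rw [hsum]
    exact Submodule.sum_mem _ (fun α _ => apply_mem_traceIdeal α (f (d α)))
  have : t * t = 0 := mul_mem_trace_eq_zero hkill htmem
  exact IsNilpotent.eq_zero ⟨2, by rwa [pow_two]⟩

open scoped Classical in
theorem exists_compat_of_central [IsReduced R] (f : Module.End R M)
    (hf : ∀ h : Module.End R M, h * f = f * h) :
    ∃ g : Module.End R (traceIdeal R M), Compat g f := by
  set T := traceIdeal R M with hT
  set s : (Π₀ _ : (M →ₗ[R] R), M) →ₗ[R] R := DFinsupp.lsum ℕ (fun α : M →ₗ[R] R => α) with hs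
  have hs_mem : ∀ d, s d ∈ T := by
    intro d
    rw [hs, DFinsupp.lsum_apply_apply, DFinsupp.sumAddHom_apply]
    exact Submodule.sum_mem _ (fun α _ => apply_mem_traceIdeal α (d α))
  set t : (Π₀ _ : (M →ₗ[R] R), M) →ₗ[R] R :=
    DFinsupp.lsum ℕ (fun α : M →ₗ[R] R => α ∘ₗ f) with hst
  have ht_mem : ∀ d, t d ∈ T := by
    intro d
    rw [hst, DFinsupp.lsum_apply_apply, DFinsupp.sumAddHom_apply]
    exact Submodule.sum_mem _ (fun α _ => apply_mem_traceIdeal α (f (d α)))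
  set s' : (Π₀ _ : (M →ₗ[R] R), M) →ₗ[R] T := LinearMap.codRestrict T s hs_mem with hs'
  set t' : (Π₀ _ : (M →ₗ[R] R), M) →ₗ[R] T := LinearMap.codRestrict T t ht_mem with ht'
  have hsurj : Function.Surjective s' := by
    rintro ⟨x, hx⟩
    have : ∃ d, s d = x := by
      refine Submodule.iSup_induction (p := fun α : M →ₗ[R] R => LinearMap.range α)
        (motive := fun x => ∃ d, s d = x) hx ?_ ?_ ?_
      · rintro α x ⟨m, rfl⟩
        exact ⟨DFinsupp.single α m, by rw [hs]; simp⟩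
      · exact ⟨0, map_zero s⟩
      · rintro x y ⟨d₁, rfl⟩ ⟨d₂, rfl⟩
        exact ⟨d₁ + d₂, map_add s d₁ d₂⟩
    obtain ⟨d, hd⟩ := this
    exact ⟨d, Subtype.ext hd⟩
  have hker : LinearMap.ker s' ≤ LinearMap.ker t' := by
    rw [hs', ht', LinearMap.ker_codRestrict, LinearMap.ker_codRestrict]
    intro d hd
    exact key_reduced hf d hd
  set q := LinearMap.quotKerEquivOfSurjective s' hsurj with hq
  have hq_mk : ∀ d, q (Submodule.Quotient.mk d) = s' d := fun d => rfl
  set g : Module.End R T := (Submodule.liftQ _ t' hker) ∘ₗ q.symm.toLinearMap with hg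
  refine ⟨g, fun α m => ?_⟩
  have h1 : s' (DFinsupp.single α m) = ⟨α m, apply_mem_traceIdeal α m⟩ :=
    Subtype.ext (by rw [hs']; simp [hs])
  have h2 : q.symm ⟨α m, apply_mem_traceIdeal α m⟩
      = Submodule.Quotient.mk (DFinsupp.single α m) := by
    rw [LinearEquiv.symm_apply_eq, hq_mk, h1]
  have h3 : g ⟨α m, apply_mem_traceIdeal α m⟩ = t' (DFinsupp.single α m) := by
    rw [hg, LinearMap.comp_apply, LinearEquiv.coe_toLinearMap, h2, Submodule.liftQ_apply]
  rw [h3, ht']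
  show α (f m) = t (DFinsupp.single α m)
  rw [hst]; simp

variable (R M) in
noncomputable def sigmaHom [Module.IsReflexive R M] :
    Module.End R (traceIdeal R M) →ₐ[R] Subalgebra.center R (Module.End R M) where
  toFun g := ⟨sigmaFun g, Subalgebra.mem_center_iff.2 (compat_central (compat_sigmaFun g))⟩
  map_one' := Subtype.ext (compat_unique (compat_sigmaFun 1) (fun _ _ => rfl))
  map_mul' g g' := Subtype.ext (compat_unique (compat_sigmaFun (g * g')) (fun α m => by
    have h2 : (⟨α (sigmaFun g' m), apply_mem_traceIdeal α _⟩ : traceIdeal R M)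
        = g' ⟨α m, apply_mem_traceIdeal α m⟩ := Subtype.ext (compat_sigmaFun g' α m)
    show α (sigmaFun g (sigmaFun g' m)) = _
    rw [compat_sigmaFun g α (sigmaFun g' m), h2]
    rfl))
  map_zero' := Subtype.ext (compat_unique (compat_sigmaFun 0) (fun α m => by simp))
  map_add' g g' := Subtype.ext (compat_unique (compat_sigmaFun (g + g')) (fun α m => by
    show α (sigmaFun g m + sigmaFun g' m) = _
    rw [map_add, compat_sigmaFun g α m, compat_sigmaFun g' α m]
    rfl))
  commutes' r := by
    refine Subtype.ext ?_
    have hcoe : (algebraMap R (Subalgebra.center R (Module.End R M)) r : Module.End R M)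
        = algebraMap R (Module.End R M) r := rfl
    rw [hcoe]
    exact compat_unique (compat_sigmaFun _) (fun α m => by
      rw [Module.algebraMap_end_apply, map_smul]
      rfl)

theorem sigmaHom_apply_coe [Module.IsReflexive R M] (g : Module.End R (traceIdeal R M)) :
    (sigmaHom R M g : Module.End R M) = sigmaFun g := rfl

theorem sigmaHom_bijective [IsReduced R] [Module.IsReflexive R M] :
    Function.Bijective (sigmaHom R M) := by
  constructor
  · intro g g' h
    have h2 : sigmaFun g = sigmaFun g' := congrArg Subtype.val h
    exact compat_injective (compat_sigmaFun g) (by rw [h2]; exact compat_sigmaFun g')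
  · rintro ⟨f, hfc⟩
    obtain ⟨g, hg⟩ := exists_compat_of_central f (fun h => Subalgebra.mem_center_iff.1 hfc h)
    exact ⟨g, Subtype.ext (compat_unique (compat_sigmaFun g) hg)⟩

end TIaux

/-- Let `R` be a reduced commutative Noetherian ring and `M` a finitely generated reflexive
`R`-module.  Then the map sending an endomorphism `g` of the trace ideal `τ(M)` to the
unique endomorphism `f` of `M` satisfying `α (f m) = g (α m)` for all `α` and `m` is an
isomorphism of `R`-algebras from `End_R(τ(M))` onto the center of `End_R(M)`. -/
theorem trace_end_iso_center_of_reduced (R : Type u) (M : Type v) [CommRing R]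
    [IsNoetherianRing R] [IsReduced R] [AddCommGroup M] [Module R M] [Module.Finite R M]
    [Module.IsReflexive R M] :
    (∀ g : Module.End R (traceIdeal R M), ∃! f : Module.End R M,
      ∀ (α : M →ₗ[R] R) (m : M),
        α (f m) = (g ⟨α m, apply_mem_traceIdeal α m⟩ : R)) ∧
    ∃ e : Module.End R (traceIdeal R M) ≃ₐ[R] Subalgebra.center R (Module.End R M),
      ∀ (g : Module.End R (traceIdeal R M)) (α : M →ₗ[R] R) (m : M),
        α ((e g : Module.End R M) m) = (g ⟨α m, apply_mem_traceIdeal α m⟩ : R) := by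
  constructor
  · intro g
    exact ⟨TIaux.sigmaFun g, TIaux.compat_sigmaFun g,
      fun f hf => TIaux.compat_unique hf (TIaux.compat_sigmaFun g)⟩
  · refine ⟨AlgEquiv.ofBijective (TIaux.sigmaHom R M) TIaux.sigmaHom_bijective, ?_⟩
    intro g α m
    exact TIaux.compat_sigmaFun g α m
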